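/- For Im τ > 0, ∏_{n=1}^∞ (1 - e^{2πinτ}) = ∑_{n=-∞}^∞ (-1)^n e^{πi(3n²-n)τ} = ∑_{n=-∞}^∞ (-1)^n e^{πi(3n²+n)τ}. -/

import Mathlib

open Complex Real Finset Filter Topology

namespace EulerPent

noncomputable section

variable (y : ℂ)

def Q (s n : ℕ) : ℂ := ∏ r ∈ Finset.Ico s n, (1 - y ^ (2 * r + 2))

def A (n s : ℕ) : ℂ := (-1) ^ s * Q y s n * y ^ (s * (s + 1) + 2 * s * n)

def G (n : ℕ) : ℂ := ∑ s ∈ Finset.range (n + 1), A y n s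

def Hs (n : ℕ) : ℂ := ∑ s ∈ Finset.range (n + 1), A y n s * y ^ (2 * s)

def R (n : ℕ) : ℂ :=
  ∑ s ∈ Finset.range (n + 1), (-1) ^ s * y ^ (s * (3 * s + 1)) +
    ∑ s ∈ Finset.range n, (-1) ^ (s + 1) * y ^ ((s + 1) * (3 * s + 2))

lemma Q_self (n : ℕ) : Q y n n = 1 := by simp [Q]

lemma Q_top {s n : ℕ} (h : s ≤ n) :
    Q y s (n + 1) = Q y s n * (1 - y ^ (2 * n + 2)) :=
  Finset.prod_Ico_succ_top h _

lemma Q_bot {s n : ℕ} (h : s < n) :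
    Q y s n = (1 - y ^ (2 * s + 2)) * Q y (s + 1) n :=
  Finset.prod_eq_prod_Ico_succ_bot h _

lemma step3 (n : ℕ) :
    G y n = (1 - y ^ (2 * n + 2)) * Hs y n + (-1) ^ n * y ^ ((n + 1) * (3 * n + 2)) := by
  have key : Hs y n - G y n = y ^ (2 * n + 2) * (Hs y n - A y n n * y ^ (2 * n)) := by
    have h1 : Hs y n - G y n
        = ∑ s ∈ Finset.range (n + 1), (A y n s * y ^ (2 * s) - A y n s) := by
      rw [Hs, G, ← Finset.sum_sub_distrib]
    have h2 : Hs y n - A y n n * y ^ (2 * n)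
        = ∑ s ∈ Finset.range n, A y n s * y ^ (2 * s) := by
      rw [Hs, Finset.sum_range_succ]; ring
    rw [h1, Finset.sum_range_succ', h2, Finset.mul_sum]
    have h3 : ∀ s ∈ Finset.range n,
        A y n (s + 1) * y ^ (2 * (s + 1)) - A y n (s + 1)
          = y ^ (2 * n + 2) * (A y n s * y ^ (2 * s)) := by
      intro s hs
      rw [Finset.mem_range] at hs
      simp only [A]
      rw [Q_bot y hs]
      ring
    rw [Finset.sum_congr rfl h3]
    simp
  have hA : y ^ (2 * n + 2) * (A y n n * y ^ (2 * n)) = (-1) ^ n * y ^ ((n + 1) * (3 * n + 2)) := by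
    simp only [A, Q_self]
    ring
  linear_combination -key + hA

lemma step2 (n : ℕ) :
    G y (n + 1) = (1 - y ^ (2 * n + 2)) * Hs y n + (-1) ^ (n + 1) * y ^ ((n + 1) * (3 * n + 4)) := by
  have h1 : ∀ s ∈ Finset.range (n + 1),
      A y (n + 1) s = (1 - y ^ (2 * n + 2)) * (A y n s * y ^ (2 * s)) := by
    intro s hs
    rw [Finset.mem_range, Nat.lt_succ_iff] at hs
    simp only [A]
    rw [Q_top y hs]
    ring
  have h2 : A y (n + 1) (n + 1) = (-1) ^ (n + 1) * y ^ ((n + 1) * (3 * n + 4)) := by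
    simp only [A, Q_self]
    ring
  rw [G, Finset.sum_range_succ, Finset.sum_congr rfl h1, ← Finset.mul_sum, h2, Hs]

lemma G_succ (n : ℕ) :
    G y (n + 1)
      = G y n + (-1) ^ (n + 1) * (y ^ ((n + 1) * (3 * n + 2)) + y ^ ((n + 1) * (3 * n + 4))) := by
  linear_combination (step2 y n) - (step3 y n) + (by rw [pow_succ]; ring :
    ((-1 : ℂ)) ^ (n + 1) = -(-1) ^ n) * (y ^ ((n + 1) * (3 * n + 2)) + y ^ ((n + 1) * (3 * n + 4)))

lemma R_succ (n : ℕ) :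
    R y (n + 1)
      = R y n + (-1) ^ (n + 1) * (y ^ ((n + 1) * (3 * n + 2)) + y ^ ((n + 1) * (3 * n + 4))) := by
  simp only [R, Finset.sum_range_succ]
  have : (n + 1) * (3 * (n + 1) + 1) = (n + 1) * (3 * n + 4) := by ring
  rw [this]
  ring

lemma G_eq_R (n : ℕ) : G y n = R y n := by
  induction n with
  | zero => simp [G, A, Q, R]
  | succ n ih => rw [G_succ, R_succ, ih]

variable {y}

lemma Q_norm_le (hy : ‖y‖ < 1) (s n : ℕ) :
    ‖Q y s n‖ ≤ Real.exp ((1 - ‖y‖)⁻¹) := by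
  have h0 : (0:ℝ) ≤ ‖y‖ := norm_nonneg y
  calc ‖∏ r ∈ Finset.Ico s n, (1 - y ^ (2 * r + 2))‖
      = ∏ r ∈ Finset.Ico s n, ‖(1 - y ^ (2 * r + 2))‖ := norm_prod _ _
    _ ≤ ∏ r ∈ Finset.Ico s n, Real.exp (‖y‖ ^ (2 * r + 2)) := by
        apply Finset.prod_le_prod (fun _ _ => norm_nonneg _)
        intro r _
        calc ‖(1 - y ^ (2 * r + 2))‖ ≤ ‖(1:ℂ)‖ + ‖y ^ (2 * r + 2)‖ := norm_sub_le _ _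
          _ = 1 + ‖y‖ ^ (2 * r + 2) := by rw [norm_one, norm_pow]
          _ ≤ Real.exp (‖y‖ ^ (2 * r + 2)) := by
              have := Real.add_one_le_exp (‖y‖ ^ (2 * r + 2))
              linarith
    _ = Real.exp (∑ r ∈ Finset.Ico s n, ‖y‖ ^ (2 * r + 2)) := (Real.exp_sum _ _).symm
    _ ≤ Real.exp ((1 - ‖y‖)⁻¹) := by
        apply Real.exp_le_exp.2
        calc ∑ r ∈ Finset.Ico s n, ‖y‖ ^ (2 * r + 2)
            ≤ ∑ r ∈ Finset.Ico s n, ‖y‖ ^ r := by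
              apply Finset.sum_le_sum
              intro r _
              exact pow_le_pow_of_le_one h0 hy.le (by omega)
          _ ≤ ∑' r : ℕ, ‖y‖ ^ r := by
              apply Summable.sum_le_tsum _ (fun _ _ => pow_nonneg h0 _)
              exact summable_geometric_of_lt_one h0 hy
          _ = (1 - ‖y‖)⁻¹ := tsum_geometric_of_lt_one h0 hy

lemma G_sub_le (hy : ‖y‖ < 1) (n : ℕ) :
    ‖G y n - Q y 0 n‖ ≤ n * (Real.exp ((1 - ‖y‖)⁻¹) * ‖y‖ ^ (2 * n + 2)) := by
  have h0 : (0:ℝ) ≤ ‖y‖ := norm_nonneg y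
  have h1 : G y n - Q y 0 n = ∑ s ∈ Finset.range n, A y n (s + 1) := by
    rw [G, Finset.sum_range_succ']
    simp [A]
  rw [h1]
  calc ‖∑ s ∈ Finset.range n, A y n (s + 1)‖
      ≤ ∑ s ∈ Finset.range n, ‖A y n (s + 1)‖ := norm_sum_le _ _
    _ ≤ ∑ _s ∈ Finset.range n, Real.exp ((1 - ‖y‖)⁻¹) * ‖y‖ ^ (2 * n + 2) := by
        apply Finset.sum_le_sum
        intro s _
        have hnorm : ‖A y n (s + 1)‖
            = ‖Q y (s + 1) n‖ * ‖y‖ ^ ((s + 1) * (s + 1 + 1) + 2 * (s + 1) * n) := by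
          rw [A, norm_mul, norm_mul, norm_pow, norm_pow, norm_neg, norm_one, one_pow, one_mul]
        rw [hnorm]
        apply mul_le_mul (Q_norm_le hy _ _) ?_ (pow_nonneg h0 _) (Real.exp_pos _).le
        exact pow_le_pow_of_le_one h0 hy.le (by nlinarith)
    _ = n * (Real.exp ((1 - ‖y‖)⁻¹) * ‖y‖ ^ (2 * n + 2)) := by
        rw [Finset.sum_const, Finset.card_range, nsmul_eq_mul]

end

end EulerPent

open EulerPent

theorem euler_pentagonal (τ : ℂ) (hτ : 0 < τ.im) :
    (∏' n : ℕ, (1 - Complex.exp (2 * π * I * (n + 1) * τ)) =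
      ∑' n : ℤ, (-1) ^ n * Complex.exp (π * I * (3 * (n : ℂ) ^ 2 - n) * τ)) ∧
    (∏' n : ℕ, (1 - Complex.exp (2 * π * I * (n + 1) * τ)) =
      ∑' n : ℤ, (-1) ^ n * Complex.exp (π * I * (3 * (n : ℂ) ^ 2 + n) * τ)) := by
  have h0y : (0:ℝ) ≤ ‖Complex.exp (π * I * τ)‖ := norm_nonneg _
  set y : ℂ := Complex.exp (π * I * τ) with hy_def
  have hyn : ‖y‖ < 1 := by
    rw [hy_def, Complex.norm_exp]
    rw [Real.exp_lt_one_iff]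
    have hre : (↑π * I * τ).re = -(π * τ.im) := by
      simp [Complex.mul_re, Complex.mul_im]
    rw [hre]
    nlinarith [Real.pi_pos, hτ]
  -- rewrite the product
  have hprod_eq : (∏' n : ℕ, (1 - Complex.exp (2 * π * I * (n + 1) * τ)))
      = ∏' n : ℕ, (1 - y ^ (2 * n + 2)) := by
    apply tprod_congr
    intro n
    congr 1
    rw [hy_def, ← Complex.exp_nat_mul]
    congr 1
    push_cast
    ring
  -- multipliability
  have hne : ∀ n : ℕ, (1 - y ^ (2 * n + 2)) ≠ 0 := by
    intro n
    have hlt : ‖y ^ (2 * n + 2)‖ < 1 := by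
      rw [norm_pow]; exact pow_lt_one₀ (norm_nonneg y) hyn (by omega)
    intro h
    rw [sub_eq_zero] at h
    rw [← h] at hlt
    simp at hlt
  have hlog : Summable fun n : ℕ => Complex.log (1 - y ^ (2 * n + 2)) := by
    have hsum : Summable fun n : ℕ => 3 / 2 * ‖y‖ ^ n :=
      (summable_geometric_of_lt_one (norm_nonneg y) hyn).mul_left _
    apply Summable.of_norm_bounded_eventually hsum
    rw [Nat.cofinite_eq_atTop]
    obtain ⟨N, hN⟩ := exists_pow_lt_of_lt_one (by norm_num : (0:ℝ) < 1/2) hyn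
    filter_upwards [eventually_ge_atTop N] with n hn
    have hsmall : ‖-(y ^ (2 * n + 2))‖ ≤ 1 / 2 := by
      rw [norm_neg, norm_pow]
      calc ‖y‖ ^ (2 * n + 2) ≤ ‖y‖ ^ N :=
            pow_le_pow_of_le_one (norm_nonneg y) hyn.le (show N ≤ 2 * n + 2 by omega)
        _ ≤ 1 / 2 := hN.le
    have hb := Complex.norm_log_one_add_half_le_self hsmall
    rw [show (1 : ℂ) + -(y ^ (2 * n + 2)) = 1 - y ^ (2 * n + 2) by ring] at hb
    calc ‖Complex.log (1 - y ^ (2 * n + 2))‖ ≤ 3 / 2 * ‖-(y ^ (2 * n + 2))‖ := hb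
      _ = 3 / 2 * ‖y‖ ^ (2 * n + 2) := by rw [norm_neg, norm_pow]
      _ ≤ 3 / 2 * ‖y‖ ^ n :=
          mul_le_mul_of_nonneg_left
            (pow_le_pow_of_le_one (norm_nonneg y) hyn.le (by omega)) (by norm_num)
  have hM : Multipliable fun n : ℕ => (1 - y ^ (2 * n + 2)) :=
    Complex.multipliable_of_summable_log hlog
  -- partial products tend to the infinite product
  have hP : Tendsto (fun n => Q y 0 n) atTop (𝓝 (∏' n : ℕ, (1 - y ^ (2 * n + 2)))) := by
    apply hM.hasProd.tendsto_prod_nat.congr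
    intro n
    rw [Q, ← Finset.range_eq_Ico]
  -- tail tends to zero
  have htail : Tendsto (fun n : ℕ => G y n - Q y 0 n) atTop (𝓝 0) := by
    apply squeeze_zero_norm (G_sub_le hyn)
    have hr2 : ‖y‖ ^ 2 < 1 := pow_lt_one₀ (norm_nonneg y) hyn two_ne_zero
    have h2 : Tendsto (fun n : ℕ => (n : ℝ) * (‖y‖ ^ 2) ^ n) atTop (𝓝 0) := by
      simpa using tendsto_pow_const_mul_const_pow_of_lt_one 1 (pow_nonneg (norm_nonneg y) 2) hr2
    have h3 := h2.const_mul (Real.exp ((1 - ‖y‖)⁻¹) * ‖y‖ ^ 2)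
    rw [mul_zero] at h3
    apply h3.congr
    intro n
    rw [← pow_mul]
    ring
  have hG : Tendsto (fun n => G y n) atTop (𝓝 (∏' n : ℕ, (1 - y ^ (2 * n + 2)))) := by
    have := hP.add htail
    rw [add_zero] at this
    apply this.congr
    intro n
    ring
  -- the two one-sided series
  set g1 : ℕ → ℂ := fun s => (-1) ^ s * y ^ (s * (3 * s + 1)) with hg1_def
  set g2 : ℕ → ℂ := fun s => (-1) ^ (s + 1) * y ^ ((s + 1) * (3 * s + 2)) with hg2_def
  have hg1 : Summable g1 := by
    apply Summable.of_norm_bounded (summable_geometric_of_lt_one (norm_nonneg y) hyn)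
    intro s
    rw [hg1_def]
    simp only [norm_mul, norm_pow, norm_neg, norm_one, one_pow, one_mul]
    exact pow_le_pow_of_le_one (norm_nonneg y) hyn.le (by nlinarith)
  have hg2 : Summable g2 := by
    apply Summable.of_norm_bounded (summable_geometric_of_lt_one (norm_nonneg y) hyn)
    intro s
    rw [hg2_def]
    simp only [norm_mul, norm_pow, norm_neg, norm_one, one_pow, one_mul]
    exact pow_le_pow_of_le_one (norm_nonneg y) hyn.le (by nlinarith)
  set a := ∑' s, g1 s with ha_def
  set b := ∑' s, g2 s with hb_def
  have hR : Tendsto (fun n => R y n) atTop (𝓝 (a + b)) := by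
    have t1 : Tendsto (fun n : ℕ => ∑ s ∈ Finset.range (n + 1), g1 s) atTop (𝓝 a) :=
      hg1.hasSum.tendsto_sum_nat.comp (tendsto_add_atTop_nat 1)
    have t2 : Tendsto (fun n : ℕ => ∑ s ∈ Finset.range n, g2 s) atTop (𝓝 b) :=
      hg2.hasSum.tendsto_sum_nat
    apply (t1.add t2).congr
    intro n
    rw [R]
  have hPab : (∏' n : ℕ, (1 - y ^ (2 * n + 2))) = a + b := by
    refine tendsto_nhds_unique ?_ hR
    exact hG.congr (fun n => G_eq_R y n)
  -- assemble the bilateral series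
  set F : ℤ → ℂ := fun k => (-1) ^ k * Complex.exp (π * I * (3 * (k : ℂ) ^ 2 - k) * τ)
    with hF_def
  have hFneg : ∀ s : ℕ, F (-(s : ℤ)) = g1 s := by
    intro s
    simp only [hF_def, hg1_def]
    rw [zpow_neg, zpow_natCast, ← inv_pow, inv_neg, inv_one]
    congr 1
    rw [hy_def, ← Complex.exp_nat_mul]
    congr 1
    push_cast
    ring
  have hFpos : ∀ s : ℕ, F ((s : ℤ) + 1) = g2 s := by
    intro s
    simp only [hF_def, hg2_def]
    rw [show ((s : ℤ) + 1) = ((s + 1 : ℕ) : ℤ) by push_cast; ring, zpow_natCast]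
    congr 1
    rw [hy_def, ← Complex.exp_nat_mul]
    congr 1
    push_cast
    ring
  have hF0 : F 0 = 1 := by
    rw [hF_def]
    norm_num
  have hsum1 : HasSum (fun n : ℕ => F n) (b + 1) := by
    have hfe : (fun n : ℕ => F ((n + 1 : ℕ) : ℤ)) = g2 := by
      funext n
      rw [← hFpos n]
      exact congrArg F (by push_cast; ring)
    have h0 : HasSum (fun n : ℕ => F ((n + 1 : ℕ) : ℤ)) b := by
      rw [hfe]; exact hg2.hasSum
    have := (hasSum_nat_add_iff (f := fun n : ℕ => F n) 1).mp h0
    simpa [hF0] using this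
  have hsum2 : HasSum (fun n : ℕ => F (-(n + 1))) (a - 1) := by
    have hg10 : g1 0 = 1 := by rw [hg1_def]; norm_num
    have h0 : HasSum (fun n : ℕ => g1 (n + 1)) (a - 1) := by
      apply (hasSum_nat_add_iff (f := g1) 1).mpr
      simp only [Finset.range_one, Finset.sum_singleton, hg10]
      rw [sub_add_cancel]
      exact hg1.hasSum
    have hfe2 : (fun n : ℕ => g1 (n + 1)) = (fun n : ℕ => F (-((n : ℤ) + 1))) := by
      funext n
      rw [← hFneg (n + 1)]
      exact congrArg F (by push_cast; ring)
    rw [hfe2] at h0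
    exact h0
  have hFsum : HasSum F ((b + 1) + (a - 1)) := HasSum.of_nat_of_neg_add_one hsum1 hsum2
  have hFtsum : (∑' k : ℤ, F k) = a + b := by
    rw [hFsum.tsum_eq]
    ring
  have first : (∏' n : ℕ, (1 - Complex.exp (2 * π * I * (n + 1) * τ))) = ∑' k : ℤ, F k := by
    rw [hprod_eq, hPab, hFtsum]
  refine ⟨first, ?_⟩
  rw [first]
  have hswap : (∑' k : ℤ, (-1) ^ k * Complex.exp (π * I * (3 * (k : ℂ) ^ 2 + k) * τ))
      = ∑' k : ℤ, F k := by
    rw [← (Equiv.neg ℤ).tsum_eq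
      (fun k : ℤ => (-1) ^ k * Complex.exp (π * I * (3 * (k : ℂ) ^ 2 + k) * τ))]
    apply tsum_congr
    intro k
    simp only [Equiv.neg_apply, hF_def]
    congr 1
    · rw [zpow_neg, ← inv_zpow, inv_neg, inv_one]
    · congr 1
      push_cast
      ring
  rw [hswap]
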